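/- For all partitions λ inside an n×k rectangle, the number of semistandard Young tableaux of shape λ with entries in {1,...,n} times the number of semistandard Young tableaux of shape λ' (the conjugate) with entries in {1,...,k}, summed over all λ ⊆ k^n, equals 2^{nk}. -/

import Mathlib

open Finset

noncomputable section
open scoped Classical

/-- `T` is a semistandard Young tableau of shape with row lengths `r` and entries in
`Fin N` (representing `{1, …, N}`): rows weakly increase, columns strictly increase. -/
def IsSsyt {m N : ℕ} (r : Fin m → ℕ) (T : ∀ i : Fin m, Fin (r i) → Fin N) : Prop :=
  (∀ (i : Fin m) (j j' : Fin (r i)), (j : ℕ) ≤ (j' : ℕ) → T i j ≤ T i j') ∧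
  (∀ (i i' : Fin m) (j : Fin (r i)) (j' : Fin (r i')),
    i < i' → (j : ℕ) = (j' : ℕ) → T i j < T i' j')

/-- The finite set of semistandard Young tableaux of shape `r` with entries in `Fin N`. -/
def ssytFinset (N : ℕ) {m : ℕ} (r : Fin m → ℕ) :
    Finset (∀ i : Fin m, Fin (r i) → Fin N) :=
  Finset.univ.filter (fun T => IsSsyt r T)

lemma card_filter_val_lt (L t : ℕ) :
    (univ.filter (fun j : Fin L => (j : ℕ) < t)).card = min t L := by
  have h1 : (univ.filter (fun j : Fin L => (j : ℕ) < t)).card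
      = ((range L).filter (fun j => j < t)).card := by
    refine Finset.card_bij (fun (j : Fin L) _ => (j : ℕ)) ?_ ?_ ?_
    · intro a ha; simp at ha ⊢; omega
    · intro a _ b _ h; exact Fin.ext h
    · intro b hb; simp at hb; exact ⟨⟨b, hb.1⟩, by simp [hb.2], rfl⟩
  rw [h1]
  have h2 : (range L).filter (fun j => j < t) = range (min t L) := by
    ext x; simp; omega
  rw [h2, card_range]

lemma dc_mem_iff {L : ℕ} (F : Finset (Fin L))
    (hdc : ∀ i j : Fin L, i ≤ j → j ∈ F → i ∈ F) (i : Fin L) :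
    i ∈ F ↔ (i : ℕ) < F.card := by
  constructor
  · intro hi
    have hsub : Finset.Iic i ⊆ F := fun j hj => hdc j i (Finset.mem_Iic.mp hj) hi
    have := Finset.card_le_card hsub
    rw [Fin.card_Iic] at this; omega
  · intro h
    by_contra hi
    have hsub : F ⊆ Finset.Iio i := by
      intro j hj
      rw [Finset.mem_Iio]
      by_contra hji
      exact hi (hdc i j (le_of_not_gt hji) hj)
    have := Finset.card_le_card hsub
    rw [Fin.card_Iio] at this; omega

/-! ### partitions in a box -/

def AntF {a b : ℕ} (l : Fin a → Fin b) : Prop := ∀ i j, i ≤ j → l j ≤ l i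

def HSF {a b : ℕ} (m l : Fin a → Fin b) : Prop :=
  (∀ i, (m i : ℕ) ≤ (l i : ℕ)) ∧
  ∀ (i : Fin a) (h : (i : ℕ) + 1 < a), (l ⟨(i : ℕ) + 1, h⟩ : ℕ) ≤ (m i : ℕ)

def VSF {a b : ℕ} (m l : Fin a → Fin b) : Prop :=
  (∀ i, (m i : ℕ) ≤ (l i : ℕ)) ∧ ∀ i, (l i : ℕ) ≤ (m i : ℕ) + 1

def cj {a b : ℕ} (l : Fin a → Fin (b + 1)) : Fin b → Fin (a + 1) :=
  fun j => ⟨(univ.filter (fun i : Fin a => (j : ℕ) < (l i : ℕ))).card,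
    Nat.lt_succ_of_le (le_trans (Finset.card_filter_le _ _) (by simp))⟩

lemma antF_of_adj {a b : ℕ} (l : Fin a → Fin b)
    (h : ∀ (i : Fin a) (hi : (i : ℕ) + 1 < a), l ⟨(i : ℕ) + 1, hi⟩ ≤ l i) : AntF l := by
  have key : ∀ d : ℕ, ∀ i j : Fin a, (j : ℕ) = (i : ℕ) + d → l j ≤ l i := by
    intro d
    induction d with
    | zero => intro i j hij; have hji : i = j := Fin.ext (by omega); rw [hji]
    | succ d ih =>
      intro i j hij
      have hd : (i : ℕ) + d < a := by omega
      have hlt : (i : ℕ) + d + 1 < a := by omega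
      have h1 : l j ≤ l ⟨(i : ℕ) + d, hd⟩ := by
        have hj : j = ⟨(i : ℕ) + d + 1, hlt⟩ := Fin.ext (by simp; omega)
        rw [hj]
        exact h ⟨(i : ℕ) + d, hd⟩ hlt
      exact le_trans h1 (ih i ⟨(i : ℕ) + d, hd⟩ rfl)
  intro i j hij
  exact key ((j : ℕ) - (i : ℕ)) i j (by omega)

lemma ssyt_card_zero_shape {a N : ℕ} (r : Fin a → ℕ) (h : ∀ i, r i = 0) :
    (ssytFinset N r).card = 1 := by
  rw [ssytFinset]
  rw [Finset.filter_true_of_mem (fun T _ => ⟨fun i j => absurd j.isLt (by simp [h i]),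
    fun i i' j => absurd j.isLt (by simp [h i])⟩)]
  rw [Finset.card_univ]
  simp [h]

lemma ssyt_card_zero_entries {a : ℕ} (r : Fin a → ℕ) (h : ¬ ∀ i, r i = 0) :
    (ssytFinset 0 r).card = 0 := by
  push_neg at h
  obtain ⟨i, hi⟩ := h
  rw [Finset.card_eq_zero]
  ext T
  simp only [ssytFinset, Finset.mem_filter, Finset.notMem_empty, iff_false]
  intro _
  have x : Fin (r i) := ⟨0, Nat.pos_of_ne_zero hi⟩
  exact absurd (T i x).isLt (by simp)

lemma ssyt_card_zero_entries' {a : ℕ} (r : Fin a → ℕ) :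
    (ssytFinset 0 r).card = if ∀ i, r i = 0 then 1 else 0 := by
  split_ifs with h
  · exact ssyt_card_zero_shape r h
  · exact ssyt_card_zero_entries r h

lemma ssyt_rows_bound {a b N : ℕ} (l : Fin a → Fin (b + 1)) (hl : AntF l)
    (h : (ssytFinset N (fun i => (l i : ℕ))).card ≠ 0) (i : Fin a) (hi : N ≤ (i : ℕ)) :
    (l i : ℕ) = 0 := by
  obtain ⟨T, hT⟩ := Finset.card_pos.mp (Nat.pos_of_ne_zero h)
  rw [ssytFinset, Finset.mem_filter] at hT
  obtain ⟨-, hrow, hcol⟩ := hT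
  by_contra hne
  have hpos : ∀ r : Fin a, r ≤ i → 0 < (l r : ℕ) := by
    intro r hr
    have := hl r i hr
    omega
  have hpos' : ∀ (d : ℕ) (hd : d < a), d ≤ (i : ℕ) → 0 < (l ⟨d, hd⟩ : ℕ) := by
    intro d hd hdi
    exact hpos ⟨d, hd⟩ (by rw [Fin.le_def]; exact hdi)
  have key : ∀ (d : ℕ) (hd : d < a) (_ : d ≤ (i : ℕ)) (hp : 0 < (l ⟨d, hd⟩ : ℕ)),
      d ≤ (T ⟨d, hd⟩ ⟨0, hp⟩ : ℕ) := by
    intro d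
    induction d with
    | zero => intro hd hdi hp; exact Nat.zero_le _
    | succ d ihd =>
      intro hd hdi hp
      have hd' : d < a := by omega
      have hdi' : d ≤ (i : ℕ) := by omega
      have hp' : 0 < (l ⟨d, hd'⟩ : ℕ) := hpos' d hd' hdi'
      have ih := ihd hd' hdi' hp'
      have hc := hcol ⟨d, hd'⟩ ⟨d + 1, hd⟩ ⟨0, hp'⟩ ⟨0, hp⟩
        (by simp [Fin.lt_def]) rfl
      rw [Fin.lt_def] at hc
      omega
  have h0 : 0 < (l ⟨(i : ℕ), i.isLt⟩ : ℕ) := hpos' (i : ℕ) i.isLt le_rfl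
  have hfin := key (i : ℕ) i.isLt le_rfl h0
  have hlt := (T ⟨(i : ℕ), i.isLt⟩ ⟨0, h0⟩).isLt
  omega

/-! ### the branching rule -/

def profF {a b N : ℕ} (r : Fin a → Fin (b + 1))
    (T : ∀ i : Fin a, Fin ((r i : ℕ)) → Fin (N + 1)) : Fin a → Fin (b + 1) :=
  fun i => ⟨(univ.filter (fun j : Fin ((r i : ℕ)) => (T i j : ℕ) < N)).card, by
    have h1 := Finset.card_filter_le (univ : Finset (Fin ((r i : ℕ))))
      (fun j => (T i j : ℕ) < N)
    simp at h1
    have h2 := (r i).isLt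
    omega⟩

lemma profF_le {a b N : ℕ} (r : Fin a → Fin (b + 1))
    (T : ∀ i : Fin a, Fin ((r i : ℕ)) → Fin (N + 1)) (i : Fin a) :
    (profF r T i : ℕ) ≤ (r i : ℕ) := by
  have h1 := Finset.card_filter_le (univ : Finset (Fin ((r i : ℕ))))
    (fun j => (T i j : ℕ) < N)
  simpa [profF] using h1

lemma profF_lt_iff {a b N : ℕ} (r : Fin a → Fin (b + 1))
    (T : ∀ i : Fin a, Fin ((r i : ℕ)) → Fin (N + 1))
    (hrow : ∀ (i : Fin a) (j j' : Fin ((r i : ℕ))), (j : ℕ) ≤ (j' : ℕ) → T i j ≤ T i j')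
    (i : Fin a) (j : Fin ((r i : ℕ))) :
    (T i j : ℕ) < N ↔ (j : ℕ) < (profF r T i : ℕ) := by
  have hdc : ∀ j j' : Fin ((r i : ℕ)), j ≤ j' →
      j' ∈ univ.filter (fun j : Fin ((r i : ℕ)) => (T i j : ℕ) < N) →
      j ∈ univ.filter (fun j : Fin ((r i : ℕ)) => (T i j : ℕ) < N) := by
    intro j j' hle hmem
    simp only [Finset.mem_filter, Finset.mem_univ, true_and] at hmem ⊢
    have := hrow i j j' hle
    rw [Fin.le_def] at this
    omega
  have := dc_mem_iff _ hdc j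
  simp only [Finset.mem_filter, Finset.mem_univ, true_and] at this
  exact this

lemma hs_gap {a b : ℕ} {m r : Fin a → Fin (b + 1)} (hr : AntF r) (hm : HSF m r)
    {i i' : Fin a} (h : i < i') : (r i' : ℕ) ≤ (m i : ℕ) := by
  have hlt : (i : ℕ) + 1 < a := by have := i'.isLt; rw [Fin.lt_def] at h; omega
  have h1 : r i' ≤ r ⟨(i : ℕ) + 1, hlt⟩ := by
    apply hr
    rw [Fin.le_def]
    simp
    rw [Fin.lt_def] at h
    omega
  have h2 := hm.2 i hlt
  rw [Fin.le_def] at h1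
  omega

lemma ssyt_branch {a b : ℕ} (N : ℕ) (r : Fin a → Fin (b + 1)) (hr : AntF r) :
    (ssytFinset (N + 1) (fun i => (r i : ℕ))).card
      = ∑ m ∈ univ.filter (fun m : Fin a → Fin (b + 1) => AntF m ∧ HSF m r),
          (ssytFinset N (fun i => (m i : ℕ))).card := by
  have hmap : ∀ T ∈ ssytFinset (N + 1) (fun i => (r i : ℕ)),
      profF r T ∈ univ.filter (fun m : Fin a → Fin (b + 1) => AntF m ∧ HSF m r) := by
    intro T hT
    rw [ssytFinset, Finset.mem_filter] at hT
    obtain ⟨-, hrow, hcol⟩ := hT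
    have hle : ∀ i, (profF r T i : ℕ) ≤ (r i : ℕ) := profF_le r T
    have hlow : ∀ (i : Fin a) (h : (i : ℕ) + 1 < a),
        (r ⟨(i : ℕ) + 1, h⟩ : ℕ) ≤ (profF r T i : ℕ) := by
      intro i h
      have hri : (r ⟨(i : ℕ) + 1, h⟩ : ℕ) ≤ (r i : ℕ) := by
        have := hr i ⟨(i : ℕ) + 1, h⟩ (by rw [Fin.le_def]; simp)
        rw [Fin.le_def] at this; exact this
      have hsub : univ.filter (fun j : Fin ((r i : ℕ)) => (j : ℕ) < (r ⟨(i : ℕ) + 1, h⟩ : ℕ))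
          ⊆ univ.filter (fun j : Fin ((r i : ℕ)) => (T i j : ℕ) < N) := by
        intro j hj
        simp only [Finset.mem_filter, Finset.mem_univ, true_and] at hj ⊢
        have hc := hcol i ⟨(i : ℕ) + 1, h⟩ j ⟨(j : ℕ), hj⟩ (by rw [Fin.lt_def]; simp) rfl
        rw [Fin.lt_def] at hc
        have := (T ⟨(i : ℕ) + 1, h⟩ ⟨(j : ℕ), hj⟩).isLt
        omega
      have hcard := Finset.card_le_card hsub
      rw [card_filter_val_lt] at hcard
      have : min ((r ⟨(i : ℕ) + 1, h⟩ : ℕ)) ((r i : ℕ)) = (r ⟨(i : ℕ) + 1, h⟩ : ℕ) :=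
        min_eq_left hri
      rw [this] at hcard
      exact hcard
    simp only [Finset.mem_filter, Finset.mem_univ, true_and]
    refine ⟨antF_of_adj _ ?_, hle, hlow⟩
    · intro i hi
      rw [Fin.le_def]
      exact le_trans (hle ⟨(i : ℕ) + 1, hi⟩) (hlow i hi)
  rw [Finset.card_eq_sum_card_fiberwise hmap]
  refine Finset.sum_congr rfl ?_
  intro m hm
  simp only [Finset.mem_filter, Finset.mem_univ, true_and] at hm
  obtain ⟨hmant, hmr⟩ := hm
  -- bijection between the fiber and SSYT of shape m with entries < N
  refine Finset.card_bij'
    (fun T hT => fun i (j : Fin ((m i : ℕ))) =>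
      (⟨(T i (Fin.castLE (hmr.1 i) j) : ℕ), by
        rw [Finset.mem_filter] at hT
        obtain ⟨hTs, hprof⟩ := hT
        rw [ssytFinset, Finset.mem_filter] at hTs
        have hiff := profF_lt_iff r T hTs.2.1 i (Fin.castLE (hmr.1 i) j)
        rw [hprof] at hiff
        exact hiff.mpr (by simpa using j.isLt)⟩ : Fin N))
    (fun T' _ => fun i (j : Fin ((r i : ℕ))) =>
      if h : (j : ℕ) < (m i : ℕ) then Fin.castLE (Nat.le_succ N) (T' i ⟨(j : ℕ), h⟩)
      else ⟨N, Nat.lt_succ_self N⟩) ?_ ?_ ?_ ?_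
  -- (1) down maps into ssytFinset N m
  · intro T hT
    rw [Finset.mem_filter] at hT
    obtain ⟨hTs, hprof⟩ := hT
    rw [ssytFinset, Finset.mem_filter] at hTs
    obtain ⟨-, hrow, hcol⟩ := hTs
    rw [ssytFinset, Finset.mem_filter]
    refine ⟨Finset.mem_univ _, ?_, ?_⟩
    · intro i j j' hjj
      rw [Fin.le_def]
      have := hrow i (Fin.castLE (hmr.1 i) j) (Fin.castLE (hmr.1 i) j') (by simpa using hjj)
      rw [Fin.le_def] at this
      simpa using this
    · intro i i' j j' hii hjj
      rw [Fin.lt_def]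
      have := hcol i i' (Fin.castLE (hmr.1 i) j) (Fin.castLE (hmr.1 i') j') hii
        (by simpa using hjj)
      rw [Fin.lt_def] at this
      simpa using this
  -- (2) up maps into the fiber
  · intro T' hT'
    rw [ssytFinset, Finset.mem_filter] at hT'
    obtain ⟨-, hrow, hcol⟩ := hT'
    rw [Finset.mem_filter]
    constructor
    · rw [ssytFinset, Finset.mem_filter]
      refine ⟨Finset.mem_univ _, ?_, ?_⟩
      · -- rows weakly increase
        intro i j j' hjj
        beta_reduce
        rw [Fin.le_def]
        by_cases h1 : (j : ℕ) < (m i : ℕ) <;> by_cases h2 : (j' : ℕ) < (m i : ℕ)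
        · rw [dif_pos h1, dif_pos h2]
          have := hrow i ⟨(j : ℕ), h1⟩ ⟨(j' : ℕ), h2⟩ hjj
          rw [Fin.le_def] at this
          simpa using this
        · rw [dif_pos h1, dif_neg h2]
          have h3 := (T' i ⟨(j : ℕ), h1⟩).isLt
          simp only [Fin.coe_castLE]
          show _ ≤ N
          omega
        · omega
        · rw [dif_neg h1, dif_neg h2]
      · -- columns strictly increase
        intro i i' j j' hii hjj
        beta_reduce
        rw [Fin.lt_def]
        have hgap : (r i' : ℕ) ≤ (m i : ℕ) := hs_gap hr hmr hii
        have hj1 : (j : ℕ) < (m i : ℕ) := by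
          have h3 : (j' : ℕ) < (r i' : ℕ) := j'.isLt
          omega
        rw [dif_pos hj1]
        by_cases h2 : (j' : ℕ) < (m i' : ℕ)
        · rw [dif_pos h2]
          have := hcol i i' ⟨(j : ℕ), hj1⟩ ⟨(j' : ℕ), h2⟩ hii (by simpa using hjj)
          rw [Fin.lt_def] at this
          simpa using this
        · rw [dif_neg h2]
          simp only [Fin.coe_castLE]
          show _ < N
          exact (T' i ⟨(j : ℕ), hj1⟩).isLt
    · -- profile is m
      funext i
      apply Fin.ext
      have hfc : (univ.filter (fun j : Fin ((r i : ℕ)) =>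
          ((if h : (j : ℕ) < (m i : ℕ) then Fin.castLE (Nat.le_succ N) (T' i ⟨(j : ℕ), h⟩)
            else ⟨N, Nat.lt_succ_self N⟩ : Fin (N + 1)) : ℕ) < N))
          = univ.filter (fun j : Fin ((r i : ℕ)) => (j : ℕ) < (m i : ℕ)) := by
        apply Finset.filter_congr
        intro j _
        by_cases h : (j : ℕ) < (m i : ℕ)
        · rw [dif_pos h]
          simp [h]
        · rw [dif_neg h]
          simp [h]
      show (univ.filter (fun j : Fin ((r i : ℕ)) =>
          ((if h : (j : ℕ) < (m i : ℕ) then Fin.castLE (Nat.le_succ N) (T' i ⟨(j : ℕ), h⟩)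
            else ⟨N, Nat.lt_succ_self N⟩ : Fin (N + 1)) : ℕ) < N)).card = (m i : ℕ)
      rw [hfc, card_filter_val_lt]
      exact min_eq_left (hmr.1 i)
  -- (3) up ∘ down = id
  · intro T hT
    have hT2 := hT
    rw [Finset.mem_filter] at hT2
    obtain ⟨hTs, hprof⟩ := hT2
    rw [ssytFinset, Finset.mem_filter] at hTs
    obtain ⟨-, hrow, -⟩ := hTs
    funext i j
    beta_reduce
    by_cases h : (j : ℕ) < (m i : ℕ)
    · rw [dif_pos h]
      apply Fin.ext
      show (T i (Fin.castLE (hmr.1 i) ⟨(j : ℕ), h⟩) : ℕ) = (T i j : ℕ)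
      congr 1
    · rw [dif_neg h]
      apply Fin.ext
      show N = (T i j : ℕ)
      have hiff := profF_lt_iff r T hrow i j
      rw [hprof] at hiff
      have h1 : ¬ (T i j : ℕ) < N := fun hc => h (hiff.mp hc)
      have h2 := (T i j).isLt
      omega
  -- (4) down ∘ up = id
  · intro T' hT'
    funext i j
    apply Fin.ext
    have hjm : (j : ℕ) < (m i : ℕ) := j.isLt
    show ((if h : ((Fin.castLE (hmr.1 i) j : Fin ((r i : ℕ))) : ℕ) < (m i : ℕ)
        then Fin.castLE (Nat.le_succ N) (T' i ⟨((Fin.castLE (hmr.1 i) j : Fin ((r i : ℕ))) : ℕ), h⟩)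
        else ⟨N, Nat.lt_succ_self N⟩ : Fin (N + 1)) : ℕ) = (T' i j : ℕ)
    rw [dif_pos (by simpa using hjm)]
    simp

/-! ### conjugation -/

lemma cj_antF {a b : ℕ} (l : Fin a → Fin (b + 1)) : AntF (cj l) := by
  intro j j' hjj
  rw [Fin.le_def]
  simp only [cj]
  apply Finset.card_le_card
  intro i hi
  simp only [Finset.mem_filter, Finset.mem_univ, true_and] at hi ⊢
  rw [Fin.le_def] at hjj
  omega

lemma cj_lt {a b : ℕ} (l : Fin a → Fin (b + 1)) (hl : AntF l) (i : Fin a) (j : Fin b) :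
    (i : ℕ) < (cj l j : ℕ) ↔ (j : ℕ) < (l i : ℕ) := by
  have hdc : ∀ i i' : Fin a, i ≤ i' →
      i' ∈ univ.filter (fun i : Fin a => (j : ℕ) < (l i : ℕ)) →
      i ∈ univ.filter (fun i : Fin a => (j : ℕ) < (l i : ℕ)) := by
    intro i i' hle hmem
    simp only [Finset.mem_filter, Finset.mem_univ, true_and] at hmem ⊢
    have := hl i i' hle
    rw [Fin.le_def] at this
    omega
  have := (dc_mem_iff _ hdc i).symm
  simp only [Finset.mem_filter, Finset.mem_univ, true_and] at this
  exact this

lemma cj_cj {a b : ℕ} (l : Fin a → Fin (b + 1)) (hl : AntF l) : cj (cj l) = l := by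
  funext i
  apply Fin.ext
  show (univ.filter (fun j : Fin b => (i : ℕ) < (cj l j : ℕ))).card = (l i : ℕ)
  have hfc : univ.filter (fun j : Fin b => (i : ℕ) < (cj l j : ℕ))
      = univ.filter (fun j : Fin b => (j : ℕ) < (l i : ℕ)) := by
    apply Finset.filter_congr
    intro j _
    exact cj_lt l hl i j
  rw [hfc, card_filter_val_lt]
  exact min_eq_left (by have := (l i).isLt; omega)

lemma cj_mono {a b : ℕ} (l l' : Fin a → Fin (b + 1)) (h : ∀ i, (l' i : ℕ) ≤ (l i : ℕ)) :
    ∀ j, (cj l' j : ℕ) ≤ (cj l j : ℕ) := by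
  intro j
  simp only [cj]
  apply Finset.card_le_card
  intro i hi
  simp only [Finset.mem_filter, Finset.mem_univ, true_and] at hi ⊢
  have := h i
  omega

lemma cj_le_iff {a b : ℕ} (l l' : Fin a → Fin (b + 1)) (hl : AntF l) (hl' : AntF l') :
    (∀ i, (l' i : ℕ) ≤ (l i : ℕ)) ↔ ∀ j, (cj l' j : ℕ) ≤ (cj l j : ℕ) := by
  constructor
  · exact cj_mono l l'
  · intro h i
    have := cj_mono (cj l) (cj l') h i
    rwa [cj_cj l hl, cj_cj l' hl'] at this

lemma master {a b : ℕ} (s t : Fin a → Fin (b + 1)) (hs : AntF s) (ht : AntF t)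
    (hst : ∀ i, (s i : ℕ) ≤ (t i : ℕ)) :
    (∀ (i : Fin a) (h : (i : ℕ) + 1 < a), (t ⟨(i : ℕ) + 1, h⟩ : ℕ) ≤ (s i : ℕ))
      ↔ ∀ j : Fin b, (cj t j : ℕ) ≤ (cj s j : ℕ) + 1 := by
  constructor
  · intro h j
    by_contra hc
    push_neg at hc
    set c := (cj s j : ℕ) with hcdef
    have hta : (cj t j : ℕ) ≤ a := by have := (cj t j).isLt; omega
    have hc1a : c + 1 < a := by omega
    have hca : c < a := by omega
    have h1 : (j : ℕ) < (t ⟨c + 1, hc1a⟩ : ℕ) := by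
      have := (cj_lt t ht ⟨c + 1, hc1a⟩ j).mp (by simp; omega)
      exact this
    have h2 := h ⟨c, hca⟩ (by simpa using hc1a)
    have h3 : (j : ℕ) < (s ⟨c, hca⟩ : ℕ) := by
      have ht' : (t ⟨(⟨c, hca⟩ : Fin a) + 1, by simpa using hc1a⟩ : ℕ) = (t ⟨c + 1, hc1a⟩ : ℕ) := by
        congr 1
      omega
    have h4 := (cj_lt s hs ⟨c, hca⟩ j).mpr h3
    simp at h4
    omega
  · intro h i hi
    by_contra hc
    push_neg at hc
    have hjb : (s i : ℕ) < b := by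
      have := (t ⟨(i : ℕ) + 1, hi⟩).isLt
      omega
    set j : Fin b := ⟨(s i : ℕ), hjb⟩ with hjdef
    have h1 : (i : ℕ) + 1 < (cj t j : ℕ) := by
      have := (cj_lt t ht ⟨(i : ℕ) + 1, hi⟩ j).mpr (by exact hc)
      simpa using this
    have h2 : (cj s j : ℕ) ≤ (i : ℕ) := by
      by_contra h2c
      push_neg at h2c
      have := (cj_lt s hs i j).mp h2c
      simp [hjdef] at this
    have := h j
    omega

lemma hsf_cj_iff {a b : ℕ} (l : Fin a → Fin (b + 1)) (m : Fin b → Fin (a + 1))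
    (hl : AntF l) (hm : AntF m) :
    HSF m (cj l) ↔ VSF (cj m) l := by
  have hcjl : AntF (cj l) := cj_antF l
  have hcjm : AntF (cj m) := cj_antF m
  constructor
  · intro ⟨h1, h2⟩
    have hle : ∀ i, ((cj m) i : ℕ) ≤ (l i : ℕ) := by
      intro i
      have := cj_mono (cj l) m h1 i
      rwa [cj_cj l hl] at this
    refine ⟨hle, ?_⟩
    intro i
    have := (master m (cj l) hm hcjl h1).mp h2 i
    rwa [cj_cj l hl] at this
  · intro ⟨h1, h2⟩
    have hle : ∀ j, (m j : ℕ) ≤ ((cj l) j : ℕ) := by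
      intro j
      have := cj_mono l (cj m) h1 j
      rwa [cj_cj m hm] at this
    refine ⟨hle, ?_⟩
    apply (master m (cj l) hm hcjl hle).mpr
    intro i
    rw [cj_cj l hl]
    exact h2 i

/-! ### the numeric local lemma -/

def Afn (k : ℕ) (μ ν : ℕ → ℕ) (i : ℕ) : ℕ :=
  (if μ i ≤ ν i ∧ ν i ≤ (if i = 0 then k else μ (i - 1)) then 1 else 0)
    + (if μ i ≤ ν i + 1 ∧ ν i + 1 ≤ (if i = 0 then k else μ (i - 1)) then 1 else 0)

def Bfn (μ ν : ℕ → ℕ) (i : ℕ) : ℕ :=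
  (if ν (i + 1) ≤ μ i ∧ μ i ≤ ν i then 1 else 0)
    + (if ν (i + 1) + 1 ≤ μ i ∧ μ i ≤ ν i + 1 then 1 else 0)

def Cfn (μ ν : ℕ → ℕ) (j : ℕ) : ℕ :=
  (if μ j ≤ ν j then 1 else 0) + (if μ j ≤ ν j + 1 then 1 else 0)

lemma numeric_step (p q x y : ℕ) (hpq : q ≤ p) (hxy : y ≤ x) :
    ((if p ≤ x then 1 else 0) + (if p ≤ x + 1 then 1 else 0)) *
      ((if q ≤ y ∧ y ≤ p then 1 else 0) + (if q ≤ y + 1 ∧ y + 1 ≤ p then 1 else 0))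
    = ((if q ≤ y then 1 else 0) + (if q ≤ y + 1 then 1 else 0)) *
      ((if y ≤ p ∧ p ≤ x then 1 else 0) + (if y + 1 ≤ p ∧ p ≤ x + 1 then 1 else 0)) := by
  split_ifs <;> omega

lemma numeric_main (n k : ℕ) (hn : 1 ≤ n) (μ ν : ℕ → ℕ)
    (hμ : ∀ i, μ (i + 1) ≤ μ i) (hν : ∀ i, ν (i + 1) ≤ ν i)
    (hμtop : μ (n - 1) = 0) (hνn : ν n = 0) (hν0 : ν 0 + 1 ≤ k) :
    ∏ i ∈ range n, Afn k μ ν i = 2 * ∏ i ∈ range n, Bfn μ ν i := by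
  have claim : ∀ d : ℕ,
      ∏ i ∈ range (d + 1), Afn k μ ν i = Cfn μ ν d * ∏ i ∈ range d, Bfn μ ν i := by
    intro d
    induction d with
    | zero =>
      rw [Finset.prod_range_one, Finset.prod_range_zero, mul_one, Afn, Cfn]
      simp only [if_pos rfl]
      split_ifs <;> omega
    | succ d ih =>
      rw [Finset.prod_range_succ, ih, Finset.prod_range_succ]
      have key : Cfn μ ν d * Afn k μ ν (d + 1) = Cfn μ ν (d + 1) * Bfn μ ν d := by
        rw [Afn, Bfn, Cfn, Cfn]
        rw [if_neg (by omega : ¬ (d + 1 = 0))]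
        simp only [Nat.add_sub_cancel]
        exact numeric_step (μ d) (μ (d + 1)) (ν d) (ν (d + 1)) (hμ d) (hν d)
      calc Cfn μ ν d * (∏ i ∈ range d, Bfn μ ν i) * Afn k μ ν (d + 1)
          = (Cfn μ ν d * Afn k μ ν (d + 1)) * ∏ i ∈ range d, Bfn μ ν i := by ring
        _ = (Cfn μ ν (d + 1) * Bfn μ ν d) * ∏ i ∈ range d, Bfn μ ν i := by rw [key]
        _ = Cfn μ ν (d + 1) * ((∏ i ∈ range d, Bfn μ ν i) * Bfn μ ν d) := by ring
  have hn1 : n = (n - 1) + 1 := by omega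
  have hC2 : Cfn μ ν (n - 1) = 2 := by
    rw [Cfn, hμtop]; simp
  have hB1 : Bfn μ ν (n - 1) = 1 := by
    rw [Bfn, ← hn1, hμtop, hνn]; simp
  calc ∏ i ∈ range n, Afn k μ ν i
      = ∏ i ∈ range ((n - 1) + 1), Afn k μ ν i := by rw [← hn1]
    _ = Cfn μ ν (n - 1) * ∏ i ∈ range (n - 1), Bfn μ ν i := claim (n - 1)
    _ = 2 * ((∏ i ∈ range (n - 1), Bfn μ ν i) * Bfn μ ν (n - 1)) := by rw [hC2, hB1, mul_one]
    _ = 2 * ∏ i ∈ range ((n - 1) + 1), Bfn μ ν i := by rw [Finset.prod_range_succ]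
    _ = 2 * ∏ i ∈ range n, Bfn μ ν i := by rw [← hn1]

/-! ### cardinalities of strip-pair sets as products -/

lemma card_filter_pi {a b : ℕ} (P : Fin a → Fin b → Prop)
    [inst : ∀ i t, Decidable (P i t)] :
    (univ.filter (fun f : Fin a → Fin b => ∀ i, P i (f i))).card
      = ∏ i, (univ.filter (fun t : Fin b => P i t)).card := by
  rw [← Fintype.card_piFinset]
  congr 1
  ext f
  simp [Fintype.mem_piFinset]

lemma card_one_val {K : ℕ} (v : ℕ) (c : Prop) [Decidable c] :
    (univ.filter (fun t : Fin (K + 1) => (t : ℕ) = v ∧ c)).card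
      = if v ≤ K ∧ c then 1 else 0 := by
  split_ifs with h
  · rw [Finset.card_eq_one]
    refine ⟨⟨v, by omega⟩, ?_⟩
    ext t
    simp only [Finset.mem_filter, Finset.mem_univ, true_and, Finset.mem_singleton]
    constructor
    · intro ⟨ht, _⟩; exact Fin.ext ht
    · intro ht; subst ht; exact ⟨rfl, h.2⟩
  · rw [Finset.card_eq_zero]
    ext t
    simp only [Finset.mem_filter, Finset.mem_univ, true_and, Finset.notMem_empty, iff_false]
    rintro ⟨ht, hc⟩
    exact h ⟨by have := t.isLt; omega, hc⟩

lemma card_one_val' {K : ℕ} (v : ℕ) (c : Prop) [Decidable c] :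
    (univ.filter (fun t : Fin (K + 1) => (t : ℕ) + 1 = v ∧ c)).card
      = if 1 ≤ v ∧ v ≤ K + 1 ∧ c then 1 else 0 := by
  split_ifs with h
  · rw [Finset.card_eq_one]
    refine ⟨⟨v - 1, by omega⟩, ?_⟩
    ext t
    simp only [Finset.mem_filter, Finset.mem_univ, true_and, Finset.mem_singleton]
    constructor
    · intro ⟨ht, _⟩; exact Fin.ext (by simp; omega)
    · intro ht; subst ht; exact ⟨by simp; omega, h.2.2⟩
  · rw [Finset.card_eq_zero]
    ext t
    simp only [Finset.mem_filter, Finset.mem_univ, true_and, Finset.notMem_empty, iff_false]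
    rintro ⟨ht, hc⟩
    exact h ⟨by omega, by have := t.isLt; omega, hc⟩

lemma card_two_vals {K : ℕ} (v₁ v₂ : ℕ) (c₁ c₂ : Prop) [Decidable c₁] [Decidable c₂] (hne : v₁ ≠ v₂) :
    (univ.filter (fun t : Fin (K + 1) =>
        ((t : ℕ) = v₁ ∧ c₁) ∨ ((t : ℕ) = v₂ ∧ c₂))).card
      = (if v₁ ≤ K ∧ c₁ then 1 else 0) + (if v₂ ≤ K ∧ c₂ then 1 else 0) := by
  rw [Finset.filter_or, Finset.card_union_of_disjoint, card_one_val, card_one_val]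
  rw [Finset.disjoint_filter]
  rintro t _ ⟨h1, -⟩ ⟨h2, -⟩
  exact hne (h1 ▸ h2)

lemma card_two_vals' {K : ℕ} (v : ℕ) (c₁ c₂ : Prop) [Decidable c₁] [Decidable c₂] :
    (univ.filter (fun t : Fin (K + 1) =>
        ((t : ℕ) = v ∧ c₁) ∨ ((t : ℕ) + 1 = v ∧ c₂))).card
      = (if v ≤ K ∧ c₁ then 1 else 0) + (if 1 ≤ v ∧ v ≤ K + 1 ∧ c₂ then 1 else 0) := by
  rw [Finset.filter_or, Finset.card_union_of_disjoint, card_one_val, card_one_val']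
  rw [Finset.disjoint_filter]
  rintro t _ ⟨h1, -⟩ ⟨h2, -⟩
  omega

/-- extend a box partition to `ℕ → ℕ` by zero -/
def ext0 {n k : ℕ} (μ : Fin n → Fin (k + 1)) : ℕ → ℕ :=
  fun i => if h : i < n then (μ ⟨i, h⟩ : ℕ) else 0

lemma ext0_val {n k : ℕ} (μ : Fin n → Fin (k + 1)) (i : Fin n) :
    ext0 μ (i : ℕ) = (μ i : ℕ) := by
  rw [ext0, dif_pos i.isLt]

lemma ext0_anti {n k : ℕ} (μ : Fin n → Fin (k + 1)) (hμ : AntF μ) (i : ℕ) :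
    ext0 μ (i + 1) ≤ ext0 μ i := by
  rw [ext0, ext0]
  by_cases h1 : i + 1 < n
  · rw [dif_pos h1, dif_pos (by omega)]
    have := hμ ⟨i, by omega⟩ ⟨i + 1, h1⟩ (by rw [Fin.le_def]; simp)
    rw [Fin.le_def] at this
    exact this
  · rw [dif_neg h1]
    omega

lemma ext0_le {n k : ℕ} (μ : Fin n → Fin (k + 1)) (i : ℕ) : ext0 μ i ≤ k := by
  rw [ext0]
  split
  · exact Fin.is_le _
  · omega

lemma set1_card (n k : ℕ) (μ ν : Fin n → Fin (k + 1)) (hμ : AntF μ) (hν : AntF ν)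
    (hν0 : ∀ i : Fin n, (ν i : ℕ) + 1 ≤ k) :
    (univ.filter (fun l : Fin n → Fin (k + 1) => AntF l ∧ HSF μ l ∧ VSF ν l)).card
      = ∏ i ∈ range n, Afn k (ext0 μ) (ext0 ν) i := by
  have hmem : ∀ l : Fin n → Fin (k + 1), (AntF l ∧ HSF μ l ∧ VSF ν l) ↔ ∀ i : Fin n,
      (((l i : ℕ) = ext0 ν (i : ℕ) ∧ (ext0 μ (i : ℕ) ≤ ext0 ν (i : ℕ) ∧
          ext0 ν (i : ℕ) ≤ (if (i : ℕ) = 0 then k else ext0 μ ((i : ℕ) - 1)))) ∨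
        ((l i : ℕ) = ext0 ν (i : ℕ) + 1 ∧ (ext0 μ (i : ℕ) ≤ ext0 ν (i : ℕ) + 1 ∧
          ext0 ν (i : ℕ) + 1 ≤ (if (i : ℕ) = 0 then k else ext0 μ ((i : ℕ) - 1))))) := by
    intro l
    constructor
    · rintro ⟨hant, ⟨hs1, hs2⟩, hv1, hv2⟩ i
      have a1 := hs1 i
      have a2 := hv1 i
      have a3 := hv2 i
      have a4 : (l i : ℕ) ≤ (if (i : ℕ) = 0 then k else ext0 μ ((i : ℕ) - 1)) := by
        split_ifs with h0
        · exact Fin.is_le _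
        · have hi1 : ((i : ℕ) - 1) + 1 < n := by have := i.isLt; omega
          have := hs2 ⟨(i : ℕ) - 1, by omega⟩ hi1
          have hieq : (⟨((i : ℕ) - 1) + 1, hi1⟩ : Fin n) = i := Fin.ext (by simp; omega)
          rw [hieq] at this
          rw [ext0, dif_pos (by omega : (i : ℕ) - 1 < n)]
          exact this
      rw [ext0_val, ext0_val]
      omega
    · intro h
      have hup : ∀ i : Fin n, ext0 μ (i : ℕ) ≤ (l i : ℕ) := by
        intro i
        have := h i
        rcases this with ⟨h1, h2, -⟩ | ⟨h1, h2, -⟩ <;> omega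
      have hub : ∀ (i : Fin n) (hi : (i : ℕ) + 1 < n), (l ⟨(i : ℕ) + 1, hi⟩ : ℕ) ≤ (μ i : ℕ) := by
        intro i hi
        have := h ⟨(i : ℕ) + 1, hi⟩
        rw [← ext0_val μ i]
        have hne : ¬ (((⟨(i : ℕ) + 1, hi⟩ : Fin n) : ℕ) = 0) := by simp
        rw [if_neg hne] at this
        have hsimp : ((⟨(i : ℕ) + 1, hi⟩ : Fin n) : ℕ) - 1 = (i : ℕ) := by simp
        rw [hsimp] at this
        rcases this with ⟨h1, -, h2⟩ | ⟨h1, -, h2⟩ <;> omega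
      refine ⟨antF_of_adj _ ?_, ⟨?_, ?_⟩, ?_, ?_⟩
      · intro i hi
        rw [Fin.le_def]
        have h1 := hub i hi
        have h2 := hup i
        rw [ext0_val] at h2
        omega
      · intro i
        have := hup i
        rw [ext0_val] at this
        exact this
      · exact hub
      · intro i
        have := h i
        rw [ext0_val] at this
        rcases this with ⟨h1, -⟩ | ⟨h1, -⟩ <;> omega
      · intro i
        have := h i
        rw [ext0_val] at this
        rcases this with ⟨h1, -⟩ | ⟨h1, -⟩ <;> omega
  rw [Finset.filter_congr (fun l _ => hmem l)]
  rw [card_filter_pi (fun (i : Fin n) (t : Fin (k + 1)) =>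
      (((t : ℕ) = ext0 ν (i : ℕ) ∧ (ext0 μ (i : ℕ) ≤ ext0 ν (i : ℕ) ∧
          ext0 ν (i : ℕ) ≤ (if (i : ℕ) = 0 then k else ext0 μ ((i : ℕ) - 1)))) ∨
        ((t : ℕ) = ext0 ν (i : ℕ) + 1 ∧ (ext0 μ (i : ℕ) ≤ ext0 ν (i : ℕ) + 1 ∧
          ext0 ν (i : ℕ) + 1 ≤ (if (i : ℕ) = 0 then k else ext0 μ ((i : ℕ) - 1))))))]
  rw [← Fin.prod_univ_eq_prod_range (fun i => Afn k (ext0 μ) (ext0 ν) i) n]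
  apply Finset.prod_congr rfl
  intro i _
  rw [card_two_vals _ _ _ _ (by omega), Afn]
  have h1 : ext0 ν (i : ℕ) + 1 ≤ k := by rw [ext0_val]; exact hν0 i
  split_ifs <;> omega

lemma set2_card (n k : ℕ) (μ ν : Fin n → Fin (k + 1)) (hμ : AntF μ) (hν : AntF ν) :
    (univ.filter (fun ρ : Fin n → Fin (k + 1) => AntF ρ ∧ VSF ρ μ ∧ HSF ρ ν)).card
      = ∏ i ∈ range n, Bfn (ext0 μ) (ext0 ν) i := by
  have hmem : ∀ ρ : Fin n → Fin (k + 1), (AntF ρ ∧ VSF ρ μ ∧ HSF ρ ν) ↔ ∀ i : Fin n,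
      (((ρ i : ℕ) = ext0 μ (i : ℕ) ∧ (ext0 ν ((i : ℕ) + 1) ≤ ext0 μ (i : ℕ) ∧
          ext0 μ (i : ℕ) ≤ ext0 ν (i : ℕ))) ∨
        ((ρ i : ℕ) + 1 = ext0 μ (i : ℕ) ∧ (ext0 ν ((i : ℕ) + 1) + 1 ≤ ext0 μ (i : ℕ) ∧
          ext0 μ (i : ℕ) ≤ ext0 ν (i : ℕ) + 1))) := by
    intro ρ
    constructor
    · rintro ⟨hant, ⟨hv1, hv2⟩, hs1, hs2⟩ i
      have b1 := hv1 i
      have b2 := hv2 i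
      have b3 := hs1 i
      have b4 : ext0 ν ((i : ℕ) + 1) ≤ (ρ i : ℕ) := by
        by_cases hi : (i : ℕ) + 1 < n
        · have := hs2 i hi
          rw [ext0, dif_pos hi]
          exact this
        · rw [ext0, dif_neg hi]
          omega
      rw [ext0_val, ext0_val]
      omega
    · intro h
      have key : ∀ i : Fin n, ext0 ν ((i : ℕ) + 1) ≤ (ρ i : ℕ) ∧ (ρ i : ℕ) ≤ ext0 ν (i : ℕ)
          ∧ (ρ i : ℕ) ≤ ext0 μ (i : ℕ) ∧ ext0 μ (i : ℕ) ≤ (ρ i : ℕ) + 1 := by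
        intro i
        rcases h i with ⟨h1, h2, h3⟩ | ⟨h1, h2, h3⟩ <;> exact ⟨by omega, by omega, by omega, by omega⟩
      refine ⟨antF_of_adj _ ?_, ⟨?_, ?_⟩, ?_, ?_⟩
      · intro i hi
        rw [Fin.le_def]
        have h1 := (key ⟨(i : ℕ) + 1, hi⟩).2.1
        have h2 := (key i).1
        have hsimp : ((⟨(i : ℕ) + 1, hi⟩ : Fin n) : ℕ) = (i : ℕ) + 1 := rfl
        rw [hsimp] at h1
        omega
      · intro i
        have := (key i).2.2.1
        rw [ext0_val] at this
        exact this
      · intro i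
        have := (key i).2.2.2
        rw [ext0_val] at this
        exact this
      · intro i
        have := (key i).2.1
        rw [ext0_val] at this
        exact this
      · intro i hi
        have := (key i).1
        rw [ext0, dif_pos hi] at this
        exact this
  rw [Finset.filter_congr (fun ρ _ => hmem ρ)]
  rw [card_filter_pi (fun (i : Fin n) (t : Fin (k + 1)) =>
      (((t : ℕ) = ext0 μ (i : ℕ) ∧ (ext0 ν ((i : ℕ) + 1) ≤ ext0 μ (i : ℕ) ∧
          ext0 μ (i : ℕ) ≤ ext0 ν (i : ℕ))) ∨
        ((t : ℕ) + 1 = ext0 μ (i : ℕ) ∧ (ext0 ν ((i : ℕ) + 1) + 1 ≤ ext0 μ (i : ℕ) ∧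
          ext0 μ (i : ℕ) ≤ ext0 ν (i : ℕ) + 1))))]
  rw [← Fin.prod_univ_eq_prod_range (fun i => Bfn (ext0 μ) (ext0 ν) i) n]
  apply Finset.prod_congr rfl
  intro i _
  rw [card_two_vals', Bfn]
  have h1 : ext0 μ (i : ℕ) ≤ k := ext0_le μ _
  split_ifs <;> omega

lemma local_card (n k : ℕ) (hn : 1 ≤ n) (μ ν : Fin n → Fin (k + 1))
    (hμ : AntF μ) (hν : AntF ν)
    (hμtop : (μ ⟨n - 1, by omega⟩ : ℕ) = 0)
    (hν0 : ∀ i : Fin n, (ν i : ℕ) + 1 ≤ k) :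
    (univ.filter (fun l : Fin n → Fin (k + 1) => AntF l ∧ HSF μ l ∧ VSF ν l)).card
      = 2 * (univ.filter (fun ρ : Fin n → Fin (k + 1) => AntF ρ ∧ VSF ρ μ ∧ HSF ρ ν)).card := by
  rw [set1_card n k μ ν hμ hν hν0, set2_card n k μ ν hμ hν]
  apply numeric_main n k hn
  · exact ext0_anti μ hμ
  · exact ext0_anti ν hν
  · rw [ext0, dif_pos (by omega : n - 1 < n)]
    exact hμtop
  · rw [ext0, dif_neg (by omega : ¬ n < n)]
  · rw [ext0, dif_pos (by omega : 0 < n)]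
    exact hν0 ⟨0, by omega⟩

/-! ### counting functions -/

def Sc {a b : ℕ} (N : ℕ) (l : Fin a → Fin (b + 1)) : ℕ :=
  (ssytFinset N (fun i => (l i : ℕ))).card

def Ec {n k : ℕ} (N : ℕ) (l : Fin n → Fin (k + 1)) : ℕ := Sc N (cj l)

lemma E_branch {n k : ℕ} (N : ℕ) (l : Fin n → Fin (k + 1)) (hl : AntF l) :
    Ec (N + 1) l
      = ∑ ν ∈ univ.filter (fun ν : Fin n → Fin (k + 1) => AntF ν ∧ VSF ν l), Ec N ν := by
  rw [Ec, Sc, ssyt_branch N (cj l) (cj_antF l)]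
  refine Finset.sum_nbij' (fun m => cj m) (fun ν => cj ν) ?_ ?_ ?_ ?_ ?_
  · intro m hm
    simp only [Finset.mem_filter, Finset.mem_univ, true_and] at hm ⊢
    exact ⟨cj_antF m, (hsf_cj_iff l m hl hm.1).mp hm.2⟩
  · intro ν hν
    simp only [Finset.mem_filter, Finset.mem_univ, true_and] at hν ⊢
    refine ⟨cj_antF ν, ?_⟩
    apply (hsf_cj_iff l (cj ν) hl (cj_antF ν)).mpr
    rw [cj_cj ν hν.1]
    exact hν.2
  · intro m hm
    simp only [Finset.mem_filter, Finset.mem_univ, true_and] at hm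
    exact cj_cj m hm.1
  · intro ν hν
    simp only [Finset.mem_filter, Finset.mem_univ, true_and] at hν
    exact cj_cj ν hν.1
  · intro m hm
    simp only [Finset.mem_filter, Finset.mem_univ, true_and] at hm
    rw [Ec, Sc, cj_cj m hm.1]

lemma Ec_zero {n k : ℕ} (l : Fin n → Fin (k + 1)) :
    Ec 0 l = if ∀ i, (l i : ℕ) = 0 then 1 else 0 := by
  rw [Ec, Sc, ssyt_card_zero_entries']
  have hiff : (∀ j : Fin k, ((cj l j : ℕ)) = 0) ↔ ∀ i, (l i : ℕ) = 0 := by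
    constructor
    · intro h i
      by_contra h0
      have hk : 0 < k := by have := (l i).isLt; omega
      have hj := h ⟨0, hk⟩
      have hmem : i ∈ univ.filter (fun i' : Fin n => ((⟨0, hk⟩ : Fin k) : ℕ) < (l i' : ℕ)) := by
        simp only [Finset.mem_filter, Finset.mem_univ, true_and]
        omega
      have := Finset.card_ne_zero_of_mem hmem
      exact this hj
    · intro h j
      show (univ.filter (fun i : Fin n => (j : ℕ) < (l i : ℕ))).card = 0
      rw [Finset.card_eq_zero, Finset.filter_eq_empty_iff]
      intro i _
      rw [h i]
      omega
  rw [if_congr hiff rfl rfl]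

lemma Ec_bound {n k : ℕ} (N : ℕ) (ν : Fin n → Fin (k + 1)) (hν : AntF ν) (hNk : N < k)
    (h : Ec N ν ≠ 0) (i : Fin n) : (ν i : ℕ) ≤ N := by
  by_contra h0
  push_neg at h0
  have hn0 : 0 < n := by have := i.isLt; omega
  have hν0 : N < (ν ⟨0, hn0⟩ : ℕ) := by
    have := hν ⟨0, hn0⟩ i (by rw [Fin.le_def]; simp)
    rw [Fin.le_def] at this
    omega
  have hz := ssyt_rows_bound (cj ν) (cj_antF ν) h ⟨N, hNk⟩ (by simp)
  have := (cj_lt ν hν ⟨0, hn0⟩ ⟨N, hNk⟩).mpr (by simpa using hν0)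
  omega

lemma Sc_topzero {n k : ℕ} (N : ℕ) (l : Fin n → Fin (k + 1)) (hl : AntF l)
    (h : Sc N l ≠ 0) (i : Fin n) (hi : N ≤ (i : ℕ)) : (l i : ℕ) = 0 :=
  ssyt_rows_bound l hl h i hi

/-- `∑ (if P then if Q then c)` as `c * card` -/
lemma sum_ite_card {α : Type*} [Fintype α] (P Q : α → Prop)
    [DecidablePred P] [DecidablePred Q] (c : ℕ) :
    ∑ x : α, (if P x then (if Q x then c else 0) else 0)
      = c * (univ.filter (fun x => P x ∧ Q x)).card := by
  rw [Finset.card_filter, Finset.mul_sum]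
  apply Finset.sum_congr rfl
  intro x _
  split_ifs <;> simp_all

lemma zero_fn_iff {n k : ℕ} (l : Fin n → Fin (k + 1)) :
    (∀ i, (l i : ℕ) = 0) ↔ l = (fun _ => (0 : Fin (k + 1))) := by
  constructor
  · intro h; funext i; exact Fin.ext (by simpa using h i)
  · intro h i; rw [h]; rfl

/-! ### the Pieri rule -/

lemma pieri {n k : ℕ} (hn : 1 ≤ n) : ∀ N : ℕ, N ≤ k → ∀ μ : Fin n → Fin (k + 1),
    AntF μ → (μ ⟨n - 1, by omega⟩ : ℕ) = 0 →
    ∑ l ∈ univ.filter (fun l : Fin n → Fin (k + 1) => AntF l ∧ HSF μ l), Ec N l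
      = 2 ^ N * Ec N μ := by
  intro N
  induction N with
  | zero =>
    intro _ μ hμ hμtop
    have hEc : ∀ l : Fin n → Fin (k + 1),
        Ec 0 l = if l = (fun _ => (0 : Fin (k + 1))) then 1 else 0 := by
      intro l
      rw [Ec_zero, if_congr (zero_fn_iff l) rfl rfl]
    rw [Finset.sum_congr rfl (fun l _ => hEc l), Finset.sum_ite_eq']
    rw [pow_zero, one_mul, Ec_zero]
    by_cases hμ0 : ∀ i, (μ i : ℕ) = 0
    · rw [if_pos hμ0, if_pos]
      simp only [Finset.mem_filter, Finset.mem_univ, true_and]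
      refine ⟨fun i j _ => le_rfl, fun i => by simpa using (hμ0 i).le, fun i h => by simp⟩
    · rw [if_neg hμ0, if_neg]
      simp only [Finset.mem_filter, Finset.mem_univ, true_and]
      rintro ⟨-, h1, -⟩
      apply hμ0
      intro i
      have := h1 i
      simpa using this
  | succ N ih =>
    intro hNk μ hμ hμtop
    have h1 : ∀ l ∈ univ.filter (fun l : Fin n → Fin (k + 1) => AntF l ∧ HSF μ l),
        Ec (N + 1) l = ∑ ν ∈ univ.filter
          (fun ν : Fin n → Fin (k + 1) => AntF ν ∧ VSF ν l), Ec N ν := by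
      intro l hl
      rw [Finset.mem_filter] at hl
      exact E_branch N l hl.2.1
    rw [Finset.sum_congr rfl h1, Finset.sum_filter]
    have h2 : ∀ l : Fin n → Fin (k + 1),
        (if AntF l ∧ HSF μ l then
          ∑ ν ∈ univ.filter (fun ν : Fin n → Fin (k + 1) => AntF ν ∧ VSF ν l), Ec N ν else 0)
        = ∑ ν : Fin n → Fin (k + 1),
            (if AntF l ∧ HSF μ l then (if AntF ν ∧ VSF ν l then Ec N ν else 0) else 0) := by
      intro l
      by_cases h : AntF l ∧ HSF μ l
      · rw [if_pos h, Finset.sum_filter]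
        apply Finset.sum_congr rfl
        intro ν _
        rw [if_pos h]
      · rw [if_neg h]
        symm
        apply Finset.sum_eq_zero
        intro ν _
        rw [if_neg h]
    rw [Finset.sum_congr rfl (fun l _ => h2 l), Finset.sum_comm]
    have h3 : ∀ ν : Fin n → Fin (k + 1),
        (∑ l : Fin n → Fin (k + 1),
          (if AntF l ∧ HSF μ l then (if AntF ν ∧ VSF ν l then Ec N ν else 0) else 0))
        = Ec N ν * (univ.filter (fun l : Fin n → Fin (k + 1) =>
            (AntF l ∧ HSF μ l) ∧ (AntF ν ∧ VSF ν l))).card :=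
      fun ν => sum_ite_card _ _ _
    rw [Finset.sum_congr rfl (fun ν _ => h3 ν)]
    have h4 : ∀ ν : Fin n → Fin (k + 1),
        Ec N ν * (univ.filter (fun l : Fin n → Fin (k + 1) =>
            (AntF l ∧ HSF μ l) ∧ (AntF ν ∧ VSF ν l))).card
        = 2 * (Ec N ν * (univ.filter (fun ρ : Fin n → Fin (k + 1) =>
            (AntF ρ ∧ VSF ρ μ) ∧ (AntF ν ∧ HSF ρ ν))).card) := by
      intro ν
      by_cases hEν : Ec N ν = 0
      · rw [hEν]; ring
      by_cases hνa : AntF ν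
      · have hb : ∀ i, (ν i : ℕ) + 1 ≤ k := by
          intro i
          have := Ec_bound N ν hνa (by omega) hEν i
          omega
        have e1 : univ.filter (fun l : Fin n → Fin (k + 1) =>
              (AntF l ∧ HSF μ l) ∧ (AntF ν ∧ VSF ν l))
            = univ.filter (fun l : Fin n → Fin (k + 1) => AntF l ∧ HSF μ l ∧ VSF ν l) :=
          Finset.filter_congr (fun l _ => by tauto)
        have e2 : univ.filter (fun ρ : Fin n → Fin (k + 1) =>
              (AntF ρ ∧ VSF ρ μ) ∧ (AntF ν ∧ HSF ρ ν))
            = univ.filter (fun ρ : Fin n → Fin (k + 1) => AntF ρ ∧ VSF ρ μ ∧ HSF ρ ν) :=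
          Finset.filter_congr (fun ρ _ => by tauto)
        rw [e1, e2, local_card n k hn μ ν hμ hνa hμtop hb]
        ring
      · have e1 : univ.filter (fun l : Fin n → Fin (k + 1) =>
              (AntF l ∧ HSF μ l) ∧ (AntF ν ∧ VSF ν l)) = ∅ := by
          rw [Finset.filter_eq_empty_iff]
          intro l _
          tauto
        have e2 : univ.filter (fun ρ : Fin n → Fin (k + 1) =>
              (AntF ρ ∧ VSF ρ μ) ∧ (AntF ν ∧ HSF ρ ν)) = ∅ := by
          rw [Finset.filter_eq_empty_iff]
          intro ρ _
          tauto
        rw [e1, e2]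
        simp
    rw [Finset.sum_congr rfl (fun ν _ => h4 ν), ← Finset.mul_sum]
    have h5 : ∀ ν : Fin n → Fin (k + 1),
        Ec N ν * (univ.filter (fun ρ : Fin n → Fin (k + 1) =>
            (AntF ρ ∧ VSF ρ μ) ∧ (AntF ν ∧ HSF ρ ν))).card
        = ∑ ρ : Fin n → Fin (k + 1),
            (if AntF ρ ∧ VSF ρ μ then (if AntF ν ∧ HSF ρ ν then Ec N ν else 0) else 0) :=
      fun ν => (sum_ite_card _ _ _).symm
    rw [Finset.sum_congr rfl (fun ν _ => h5 ν), Finset.sum_comm]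
    have h6 : ∀ ρ : Fin n → Fin (k + 1),
        (∑ ν : Fin n → Fin (k + 1),
          (if AntF ρ ∧ VSF ρ μ then (if AntF ν ∧ HSF ρ ν then Ec N ν else 0) else 0))
        = (if AntF ρ ∧ VSF ρ μ then 2 ^ N * Ec N ρ else 0) := by
      intro ρ
      by_cases h : AntF ρ ∧ VSF ρ μ
      · rw [if_pos h]
        have htop : (ρ ⟨n - 1, by omega⟩ : ℕ) = 0 := by
          have := h.2.1 ⟨n - 1, by omega⟩
          omega
        rw [← ih (by omega) ρ h.1 htop, Finset.sum_filter]
        apply Finset.sum_congr rfl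
        intro ν _
        rw [if_pos h]
      · rw [if_neg h]
        apply Finset.sum_eq_zero
        intro ν _
        rw [if_neg h]
    rw [Finset.sum_congr rfl (fun ρ _ => h6 ρ), ← Finset.sum_filter, ← Finset.mul_sum,
      ← E_branch N μ hμ]
    ring

/-! ### main induction -/

lemma main_sum {n k : ℕ} (hn : 1 ≤ n) : ∀ N : ℕ, N ≤ n →
    ∑ l ∈ univ.filter (fun l : Fin n → Fin (k + 1) => AntF l), Sc N l * Ec k l
      = 2 ^ (N * k) := by
  intro N
  induction N with
  | zero =>
    intro _
    have hSc : ∀ l : Fin n → Fin (k + 1),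
        Sc 0 l * Ec k l = if l = (fun _ => (0 : Fin (k + 1))) then Ec k l else 0 := by
      intro l
      rw [Sc, ssyt_card_zero_entries', if_congr (zero_fn_iff l) rfl rfl]
      split_ifs <;> simp
    rw [Finset.sum_congr rfl (fun l _ => hSc l), Finset.sum_ite_eq']
    have hz : (fun _ => (0 : Fin (k + 1))) ∈ univ.filter
        (fun l : Fin n → Fin (k + 1) => AntF l) := by
      simp only [Finset.mem_filter, Finset.mem_univ, true_and]
      exact fun i j _ => le_rfl
    rw [if_pos hz]
    have hcz : ∀ j : Fin k, ((cj (fun _ : Fin n => (0 : Fin (k + 1))) j) : ℕ) = 0 := by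
      intro j
      show (univ.filter (fun i : Fin n => (j : ℕ) < ((0 : Fin (k + 1)) : ℕ))).card = 0
      rw [Finset.card_eq_zero, Finset.filter_eq_empty_iff]
      intro i _
      simp
    rw [Ec, Sc, ssyt_card_zero_shape _ hcz]
    simp
  | succ N ih =>
    intro hNn
    have h1 : ∀ l ∈ univ.filter (fun l : Fin n → Fin (k + 1) => AntF l),
        Sc (N + 1) l * Ec k l = (∑ m ∈ univ.filter
          (fun m : Fin n → Fin (k + 1) => AntF m ∧ HSF m l), Sc N m) * Ec k l := by
      intro l hl
      rw [Finset.mem_filter] at hl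
      rw [Sc, ssyt_branch N l hl.2]
      rfl
    rw [Finset.sum_congr rfl h1, Finset.sum_filter]
    have h2 : ∀ l : Fin n → Fin (k + 1),
        (if AntF l then (∑ m ∈ univ.filter
            (fun m : Fin n → Fin (k + 1) => AntF m ∧ HSF m l), Sc N m) * Ec k l else 0)
        = ∑ m : Fin n → Fin (k + 1),
            (if AntF l then (if AntF m ∧ HSF m l then Sc N m * Ec k l else 0) else 0) := by
      intro l
      by_cases h : AntF l
      · rw [if_pos h, Finset.sum_mul, Finset.sum_filter]
        apply Finset.sum_congr rfl
        intro m _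
        rw [if_pos h]
      · rw [if_neg h]
        symm
        apply Finset.sum_eq_zero
        intro m _
        rw [if_neg h]
    rw [Finset.sum_congr rfl (fun l _ => h2 l), Finset.sum_comm]
    have h3 : ∀ m : Fin n → Fin (k + 1),
        (∑ l : Fin n → Fin (k + 1),
          (if AntF l then (if AntF m ∧ HSF m l then Sc N m * Ec k l else 0) else 0))
        = (if AntF m then 2 ^ k * (Sc N m * Ec k m) else 0) := by
      intro m
      have hsw : ∀ l : Fin n → Fin (k + 1),
          (if AntF l then (if AntF m ∧ HSF m l then Sc N m * Ec k l else 0) else 0)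
          = (if AntF m then (if AntF l ∧ HSF m l then Sc N m * Ec k l else 0) else 0) := by
        intro l
        split_ifs <;> tauto
      rw [Finset.sum_congr rfl (fun l _ => hsw l)]
      by_cases hm : AntF m
      · simp only [if_pos hm]
        by_cases hS : Sc N m = 0
        · rw [hS]
          simp only [zero_mul, mul_zero]
          apply Finset.sum_eq_zero
          intro l _
          split_ifs <;> rfl
        · have htop : (m ⟨n - 1, by omega⟩ : ℕ) = 0 :=
            Sc_topzero N m hm hS ⟨n - 1, by omega⟩ (by simp; omega)
          rw [← Finset.sum_filter, ← Finset.mul_sum,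
            pieri hn k le_rfl m hm htop]
          ring
      · simp only [if_neg hm]
        apply Finset.sum_eq_zero
        intro l _
        rfl
    rw [Finset.sum_congr rfl (fun m _ => h3 m), ← Finset.sum_filter, ← Finset.mul_sum,
      ih (by omega)]
    rw [← pow_add]
    congr 1
    ring


/-- Summing over all partitions `λ` inside an `n × k` rectangle, the number of SSYT of
shape `λ` with entries in `{1,…,n}` times the number of SSYT of the conjugate shape `λ'`
with entries in `{1,…,k}` equals `2^{nk}`. -/
theorem stmt13 (n k : ℕ) :
    ∑ l ∈ (Finset.univ.filter
        (fun l : Fin n → Fin (k + 1) => ∀ i j : Fin n, i ≤ j → l j ≤ l i)),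
      (ssytFinset n (fun i : Fin n => (l i : ℕ))).card
        * (ssytFinset k (fun j : Fin k =>
            (Finset.univ.filter (fun i : Fin n => (j : ℕ) < (l i : ℕ))).card)).card
      = 2 ^ (n * k) := by
  by_cases hn : n = 0
  · subst hn
    have hone : ∀ l : Fin 0 → Fin (k + 1),
        (ssytFinset 0 (fun i : Fin 0 => (l i : ℕ))).card
          * (ssytFinset k (fun j : Fin k =>
              (Finset.univ.filter (fun i : Fin 0 => (j : ℕ) < (l i : ℕ))).card)).card = 1 := by
      intro l
      rw [ssyt_card_zero_shape _ (fun i => i.elim0),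
        ssyt_card_zero_shape _ (fun j => by simp), one_mul]
    rw [Finset.sum_congr rfl (fun l _ => hone l)]
    rw [Finset.sum_const, smul_eq_mul, mul_one]
    have huniv : (Finset.univ.filter
        (fun l : Fin 0 → Fin (k + 1) => ∀ i j : Fin 0, i ≤ j → l j ≤ l i)) = Finset.univ :=
      Finset.filter_true_of_mem (fun l _ => fun i => i.elim0)
    rw [huniv, Finset.card_univ]
    simp
  · have h := main_sum (k := k) (n := n) (by omega) n le_rfl
    have hset : (Finset.univ.filter
          (fun l : Fin n → Fin (k + 1) => ∀ i j : Fin n, i ≤ j → l j ≤ l i))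
        = Finset.univ.filter (fun l : Fin n → Fin (k + 1) => AntF l) := by
      ext l
      simp only [Finset.mem_filter]
      exact Iff.rfl
    rw [hset]
    exact h

end
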